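/- Let n ≥ 4 be an even integer. Then the unique-Ramsey number of Hamilton cycles satisfies r_u(n, C_n) ≤ n/2 + 1; that is, there exists an edge-coloring of the complete graph K_n with n/2 + 1 colors under which every Hamilton cycle of K_n contains some color occurring exactly once. -/

import Mathlib

open SimpleGraph

namespace URAux

set_option linter.unusedSectionVars false

variable {V : Type*} [DecidableEq V] {G : SimpleGraph V}

lemma sym2_repr (z : Sym2 V) : ∃ x y, z = s(x, y) := by
  induction z using Sym2.ind with
  | _ x y => exact ⟨x, y, rfl⟩

lemma countP_edges_mem (x : V) {u v : V} (w : G.Walk u v) :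
    w.edges.countP (fun e => decide (x ∈ e)) =
      w.support.dropLast.count x + w.support.tail.count x := by
  induction w with
  | nil => simp
  | @cons u b v h p ih =>
    have hub : u ≠ b := h.ne
    have hsup : p.support ≠ [] := p.support_ne_nil
    rw [Walk.edges_cons, List.countP_cons, Walk.support_cons, List.tail_cons,
        List.dropLast_cons_of_ne_nil hsup, ih]
    have hps : List.count x p.support = List.count x p.support.tail + (if b = x then 1 else 0) := by
      rw [p.support_eq_cons, List.count_cons]
      simp
    rw [hps, List.count_cons]
    clear hps ih
    rcases eq_or_ne x u with rfl | hxu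
    · rcases eq_or_ne x b with rfl | hxb
      · exact absurd rfl hub
      · simp [Sym2.mem_iff, hxb, Ne.symm hxb]; omega
    · rcases eq_or_ne x b with rfl | hxb
      · simp [Sym2.mem_iff, hxu, Ne.symm hxu]; omega
      · simp [Sym2.mem_iff, hxu, hxb, Ne.symm hxu, Ne.symm hxb]

lemma parity_cross (b : V → Bool) (cr : Sym2 V → Bool)
    (hcr : ∀ x y, cr s(x, y) = xor (b x) (b y)) {u v : V} (w : G.Walk u v) :
    w.edges.countP cr % 2 = (if b u = b v then 0 else 1) := by
  induction w with
  | nil => simp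
  | @cons u c v h p ih =>
    rw [Walk.edges_cons, List.countP_cons, hcr]
    cases hbu : b u <;> cases hbc : b c <;> cases hbv : b v <;>
      simp [hbu, hbc, hbv] at ih ⊢ <;> omega

lemma all_same_side (b : V → Bool) (cr : Sym2 V → Bool)
    (hcr : ∀ x y, cr s(x, y) = xor (b x) (b y)) {u v : V} (w : G.Walk u v)
    (h : ∀ e ∈ w.edges, cr e = false) : ∀ x ∈ w.support, b x = b u := by
  induction w with
  | nil => intro x hx; simp at hx; subst hx; rfl
  | @cons u c v hadj p ih =>
    intro x hx
    have h1 : cr s(u, c) = false := h _ (by simp)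
    rw [hcr] at h1
    have h2 : b u = b c := by
      cases hbu : b u <;> cases hbc : b c <;> simp [hbu, hbc] at h1 ⊢
    rw [Walk.support_cons] at hx
    rcases List.mem_cons.mp hx with rfl | hx
    · rfl
    · rw [ih (fun e he => h e (by simp [he])) x hx, h2]

lemma card_filter_toFinset {α : Type*} [DecidableEq α] {l : List α} (h : l.Nodup)
    (p : α → Prop) [DecidablePred p] :
    (l.toFinset.filter p).card = l.countP (fun e => decide (p e)) := by
  have h1 : (l.filter (fun e => decide (p e))).toFinset = l.toFinset.filter p := by
    ext e; simp [List.mem_filter]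
  rw [← h1, List.toFinset_card_of_nodup (h.filter _), List.countP_eq_length_filter]

/-- The color of a vertex viewed as hub index. -/
def cOf (n M : ℕ) (v : Fin n) : Fin (n / 2 + 1) :=
  ⟨min (v.val - M) (n / 2), by omega⟩

/-- Background color. -/
def bgc (n : ℕ) : Fin (n / 2 + 1) := ⟨n / 2, by omega⟩

/-- The coloring: edges between a hub `x` (those with `M ≤ x.val < 2M+1`) and
an `A`-vertex `y` (those with `y.val < M`) get the hub's color; everything else
gets the background color. -/
def chi (n M : ℕ) : Sym2 (Fin n) → Fin (n / 2 + 1) :=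
  Sym2.lift ⟨fun x y =>
    if x.val < M ∧ M ≤ y.val ∧ y.val < 2 * M + 1 then cOf n M y
    else if y.val < M ∧ M ≤ x.val ∧ x.val < 2 * M + 1 then cOf n M x
    else bgc n,
    by
      intro x y
      dsimp only
      split_ifs <;> first | rfl | (exfalso; omega)⟩

lemma chi_mk (n M : ℕ) (x y : Fin n) :
    chi n M s(x, y) =
      if x.val < M ∧ M ≤ y.val ∧ y.val < 2 * M + 1 then cOf n M y
      else if y.val < M ∧ M ≤ x.val ∧ x.val < 2 * M + 1 then cOf n M x
      else bgc n := rfl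

lemma cOf_val (n M : ℕ) (v : Fin n) : (cOf n M v).val = min (v.val - M) (n / 2) := rfl

lemma bgc_val (n : ℕ) : (bgc n).val = n / 2 := rfl

end URAux

set_option maxHeartbeats 2000000 in
/-- **Proposition.** For even `n ≥ 4`, `r_u(n, C_n) ≤ n/2 + 1`: there is an
edge-coloring of `K_n` with `n/2 + 1` colors under which every Hamilton cycle
has some color occurring exactly once. -/
theorem unique_ramsey_hamilton_cycle_upper (n : ℕ) (hn : 4 ≤ n) (hne : Even n) :
    ∃ χ : Sym2 (Fin n) → Fin (n / 2 + 1),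
      ∀ (a : Fin n) (w : (⊤ : SimpleGraph (Fin n)).Walk a a), w.IsHamiltonianCycle →
        ∃ c, (w.edges.filter (fun e => χ e = c)).length = 1 := by
  classical
  have hn2 : n % 2 = 0 := Nat.even_iff.mp hne
  set M := n / 2 - 1 with hMdef
  have hMn : n = 2 * M + 2 := by omega
  have hdiv : n / 2 = M + 1 := by omega
  have hM1 : 1 ≤ M := by omega
  refine ⟨URAux.chi n M, ?_⟩
  intro a w hw
  by_contra hcon
  push_neg at hcon
  have hnd : w.edges.Nodup := hw.isCycle.isCircuit.isTrail.edges_nodup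
  have hcon' : ∀ c : Fin (n / 2 + 1),
      w.edges.countP (fun e => decide (URAux.chi n M e = c)) ≠ 1 := by
    intro c
    rw [List.countP_eq_length_filter]
    exact hcon c
  -- every vertex is incident with exactly two edges of the cycle
  have hdeg : ∀ x : Fin n, w.edges.countP (fun e => decide (x ∈ e)) = 2 := by
    intro x
    rw [URAux.countP_edges_mem]
    have hnil : ¬ w.Nil := hw.isCycle.not_nil
    have h1 : w.support.tail.count x = 1 := by
      rw [← Walk.support_tail_of_not_nil w hnil]; exact hw.isHamiltonian_tail x
    have hlast : w.support.getLast (by simp) = a := w.getLast_support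
    have hsplit : w.support.dropLast ++ [a] = w.support := by
      have h2 := List.dropLast_append_getLast (l := w.support) (by simp)
      rwa [hlast] at h2
    have hcount : w.support.count x = w.support.dropLast.count x + (if x = a then 1 else 0) := by
      conv_lhs => rw [← hsplit]
      rw [List.count_append, List.count_singleton']
      simp [eq_comm]
    have hdl : w.support.dropLast.count x = 1 := by
      by_cases hxa : x = a
      · subst hxa
        rw [hw.count_support_self] at hcount
        simp at hcount
        omega
      · rw [hw.support_count_of_ne (Ne.symm hxa)] at hcount
        simp [hxa] at hcount
        omega
    rw [h1, hdl]
  -- class characterization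
  have hclass : ∀ (x y : Fin n) (c : Fin (n / 2 + 1)), URAux.chi n M s(x, y) = c → c.val ≤ M →
      (M ≤ x.val ∧ x.val < 2 * M + 1 ∧ y.val < M ∧ x.val = M + c.val) ∨
      (M ≤ y.val ∧ y.val < 2 * M + 1 ∧ x.val < M ∧ y.val = M + c.val) := by
    intro x y c hc hcM
    have hx := x.isLt; have hy := y.isLt
    rw [URAux.chi_mk] at hc
    split_ifs at hc with h1 h2
    · have hv := congrArg Fin.val hc
      rw [URAux.cOf_val] at hv
      exact Or.inr ⟨h1.2.1, h1.2.2, h1.1, by omega⟩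
    · have hv := congrArg Fin.val hc
      rw [URAux.cOf_val] at hv
      exact Or.inl ⟨h2.2.1, h2.2.2, h2.1, by omega⟩
    · exfalso
      have hv := congrArg Fin.val hc
      rw [URAux.bgc_val] at hv
      omega
  -- each color-of-hub edge contains its hub
  have hmem_of_class : ∀ h : Fin n, M ≤ h.val → h.val < 2 * M + 1 →
      ∀ e ∈ w.edges, URAux.chi n M e = URAux.cOf n M h → h ∈ e := by
    intro h hh1 hh2 e he hc
    obtain ⟨x, y, rfl⟩ := URAux.sym2_repr e
    have hcv : (URAux.cOf n M h).val ≤ M := by rw [URAux.cOf_val]; omega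
    have hcv2 : (URAux.cOf n M h).val = h.val - M := by rw [URAux.cOf_val]; omega
    rcases hclass x y _ hc hcv with ⟨hx1, hx2, hy3, hxv⟩ | ⟨hy1, hy2, hx3, hyv⟩
    · have : x = h := Fin.ext (by omega)
      rw [Sym2.mem_iff]; left; exact this.symm
    · have : y = h := Fin.ext (by omega)
      rw [Sym2.mem_iff]; right; exact this.symm
  have ht2 : ∀ h : Fin n, M ≤ h.val → h.val < 2 * M + 1 →
      w.edges.countP (fun e => decide (URAux.chi n M e = URAux.cOf n M h)) ≤ 2 := by
    intro h hh1 hh2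
    calc w.edges.countP (fun e => decide (URAux.chi n M e = URAux.cOf n M h))
        ≤ w.edges.countP (fun e => decide (h ∈ e)) := by
          apply List.countP_mono_left
          intro e he hp
          simp only [decide_eq_true_eq] at hp ⊢
          exact hmem_of_class h hh1 hh2 e he hp
      _ = 2 := hdeg h
  by_cases hzex : ∃ hv : Fin n, M ≤ hv.val ∧ hv.val < 2 * M + 1 ∧
      w.edges.countP (fun e => decide (URAux.chi n M e = URAux.cOf n M hv)) = 0
  · -- Case B : some hub has no colored edge in the cycle
    obtain ⟨z, hz1, hz2, hz0⟩ := hzex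
    set Sb : Fin n → Bool := fun v => decide (v.val = 2 * M + 1 ∨ (M ≤ v.val ∧ v.val < 2 * M + 1 ∧
      w.edges.countP (fun e => decide (URAux.chi n M e = URAux.cOf n M v)) = 0)) with hSbdef
    set Zb : Fin n → Bool := fun v => decide (M ≤ v.val ∧ v.val < 2 * M + 1 ∧
      w.edges.countP (fun e => decide (URAux.chi n M e = URAux.cOf n M v)) = 0) with hZbdef
    have hZS : ∀ v, Zb v = true → Sb v = true := by
      intro v hv
      simp only [hZbdef, decide_eq_true_eq] at hv
      simp only [hSbdef, decide_eq_true_eq]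
      exact Or.inr hv
    set fvert : Fin n := ⟨2 * M + 1, by omega⟩ with hfdef
    set a0 : Fin n := ⟨0, by omega⟩ with ha0def
    have hstep : ∀ x y : Fin n, s(x, y) ∈ w.edges → Zb x = true → Sb y = true := by
      intro x y hmem hZx
      simp only [hZbdef, decide_eq_true_eq] at hZx
      obtain ⟨hx1, hx2, hx0⟩ := hZx
      have hadj : x ≠ y := by
        have := w.adj_of_mem_edges hmem
        simpa using this
      have hyu := y.isLt
      simp only [hSbdef, decide_eq_true_eq]
      by_cases hyA : y.val < M
      · exfalso
        have hchi : URAux.chi n M s(x, y) = URAux.cOf n M x := by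
          rw [URAux.chi_mk, if_neg (by omega), if_pos ⟨hyA, hx1, hx2⟩]
        have hpos : 0 < w.edges.countP (fun e => decide (URAux.chi n M e = URAux.cOf n M x)) := by
          rw [List.countP_pos_iff]
          exact ⟨s(x, y), hmem, by simp [hchi]⟩
        omega
      · by_cases hyf : y.val = 2 * M + 1
        · exact Or.inl hyf
        · have hyH : M ≤ y.val := by omega
          have hy2 : y.val < 2 * M + 1 := by omega
          right; refine ⟨hyH, hy2, ?_⟩
          by_contra hty
          have h2 : w.edges.countP (fun e => decide (URAux.chi n M e = URAux.cOf n M y)) = 2 := by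
            have ha := ht2 y hyH hy2
            have hb := hcon' (URAux.cOf n M y)
            omega
          have hbgxy : URAux.chi n M s(x, y) = URAux.bgc n := by
            rw [URAux.chi_mk, if_neg (by omega), if_neg (by omega)]
          set Cls := w.edges.toFinset.filter
            (fun e => URAux.chi n M e = URAux.cOf n M y) with hClsdef
          have hCcard : Cls.card = 2 := by
            rw [hClsdef, URAux.card_filter_toFinset hnd]; exact h2
          have hnotin : s(x, y) ∉ Cls := by
            rw [hClsdef]
            simp only [Finset.mem_filter, not_and]
            intro _
            rw [hbgxy]
            intro hcc
            have := congrArg Fin.val hcc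
            rw [URAux.bgc_val, URAux.cOf_val] at this
            omega
          have hins : insert (s(x, y)) Cls ⊆
              w.edges.toFinset.filter (fun e => y ∈ e) := by
            intro e he
            rcases Finset.mem_insert.mp he with rfl | heC
            · simp only [Finset.mem_filter, List.mem_toFinset]
              exact ⟨hmem, by rw [Sym2.mem_iff]; right; rfl⟩
            · rw [hClsdef] at heC
              simp only [Finset.mem_filter, List.mem_toFinset] at heC ⊢
              exact ⟨heC.1, hmem_of_class y hyH hy2 e heC.1 heC.2⟩
          have hle := Finset.card_le_card hins
          rw [Finset.card_insert_of_notMem hnotin, hCcard,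
            URAux.card_filter_toFinset hnd, hdeg y] at hle
          omega
    set crS : Sym2 (Fin n) → Bool :=
      Sym2.lift ⟨fun x y => xor (Sb x) (Sb y), fun x y => Bool.xor_comm _ _⟩ with hcrSdef
    have hcrS_mk : ∀ x y : Fin n, crS s(x, y) = xor (Sb x) (Sb y) := fun x y => rfl
    have hpar0 : w.edges.countP crS % 2 = 0 := by
      have := URAux.parity_cross Sb crS hcrS_mk w
      simpa using this
    have hcrf : ∀ e ∈ w.edges, crS e = true → fvert ∈ e := by
      have hfv_of : ∀ u w' : Fin n, s(u, w') ∈ w.edges → Sb u = true → Sb w' = false →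
          fvert ∈ s(u, w') := by
        intro u w' hm hSu hSw
        simp only [hSbdef, decide_eq_true_eq] at hSu
        rcases hSu with h1 | h2
        · rw [Sym2.mem_iff]; left
          exact (Fin.ext (by rw [hfdef]; exact h1.symm) : fvert = u).symm ▸ rfl
        · have hZu : Zb u = true := by
            simp only [hZbdef, decide_eq_true_eq]; exact h2
          have := hstep u w' hm hZu
          rw [hSw] at this
          exact absurd this (by simp)
      intro e he hcr
      obtain ⟨x, y, rfl⟩ := URAux.sym2_repr e
      rw [hcrS_mk] at hcr
      cases hbx : Sb x <;> cases hby : Sb y <;> rw [hbx, hby] at hcr <;> simp at hcr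
      · have := hfv_of y x (by rwa [Sym2.eq_swap]) hby hbx
        rwa [Sym2.eq_swap]
      · exact hfv_of x y he hbx hby
    have hk2 : w.edges.countP crS ≤ 2 := by
      calc w.edges.countP crS ≤ w.edges.countP (fun e => decide (fvert ∈ e)) := by
            apply List.countP_mono_left
            intro e he hp
            simp only [decide_eq_true_eq]
            exact hcrf e he hp
        _ = 2 := hdeg fvert
    have hzsup : z ∈ w.support := hw.mem_support z
    have ha0sup : a0 ∈ w.support := hw.mem_support a0
    have hZbz : Zb z = true := by
      simp only [hZbdef, decide_eq_true_eq]; exact ⟨hz1, hz2, hz0⟩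
    have hSbz : Sb z = true := hZS z hZbz
    have hSba0 : Sb a0 = false := by
      simp only [hSbdef, ha0def, decide_eq_false_iff_not]
      rintro (h | ⟨h, -⟩) <;> simp at h <;> omega
    have hZba0 : Zb a0 = false := by
      simp only [hZbdef, ha0def, decide_eq_false_iff_not]
      rintro ⟨h, -⟩; simp at h; omega
    have hk02 : w.edges.countP crS = 0 ∨ w.edges.countP crS = 2 := by omega
    rcases hk02 with h0 | h2
    · have hall : ∀ e ∈ w.edges, crS e = false := by
        intro e he
        have := List.countP_eq_zero.mp h0 e he
        exact Bool.not_eq_true _ ▸ (by simpa using this)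
      have hz' := URAux.all_same_side Sb crS hcrS_mk w hall z hzsup
      have ha' := URAux.all_same_side Sb crS hcrS_mk w hall a0 ha0sup
      rw [hSbz] at hz'
      rw [hSba0] at ha'
      rw [← hz'] at ha'
      exact absurd ha' (by simp)
    · set CrF := w.edges.toFinset.filter (fun e => crS e = true) with hCrFdef
      set FeF := w.edges.toFinset.filter (fun e => fvert ∈ e) with hFeFdef
      have hCr_card : CrF.card = 2 := by
        rw [hCrFdef, URAux.card_filter_toFinset hnd]
        have : (fun e => decide (crS e = true)) = crS := by
          funext e; cases crS e <;> simp
        rw [this]; exact h2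
      have hFe_card : FeF.card = 2 := by
        rw [hFeFdef, URAux.card_filter_toFinset hnd]; exact hdeg fvert
      have hsub : CrF ⊆ FeF := by
        intro e he
        rw [hCrFdef] at he; rw [hFeFdef]
        simp only [Finset.mem_filter, List.mem_toFinset] at he ⊢
        exact ⟨he.1, hcrf e he.1 he.2⟩
      have hEq : CrF = FeF := Finset.eq_of_subset_of_card_le hsub (by omega)
      set crZ : Sym2 (Fin n) → Bool :=
        Sym2.lift ⟨fun x y => xor (Zb x) (Zb y), fun x y => Bool.xor_comm _ _⟩ with hcrZdef
      have hcrZ_mk : ∀ x y : Fin n, crZ s(x, y) = xor (Zb x) (Zb y) := fun x y => rfl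
      have haux : ∀ u w' : Fin n, s(u, w') ∈ w.edges → Zb u = true → Zb w' = false → False := by
        intro u w' hm hZu hZw
        have hSw := hstep u w' hm hZu
        have hw'f : w'.val = 2 * M + 1 := by
          simp only [hSbdef, decide_eq_true_eq] at hSw
          rcases hSw with h | h
          · exact h
          · exfalso
            have : Zb w' = true := by
              simp only [hZbdef, decide_eq_true_eq]; exact h
            rw [this] at hZw; exact absurd hZw (by simp)
        have hw'eq : w' = fvert := Fin.ext (by rw [hfdef]; exact hw'f)
        have hmemF : s(u, w') ∈ FeF := by
          rw [hFeFdef]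
          simp only [Finset.mem_filter, List.mem_toFinset]
          exact ⟨hm, by rw [Sym2.mem_iff]; right; exact hw'eq.symm⟩
        rw [← hEq, hCrFdef] at hmemF
        simp only [Finset.mem_filter, List.mem_toFinset] at hmemF
        have hcrT := hmemF.2
        rw [hcrS_mk] at hcrT
        have hSu : Sb u = true := hZS u hZu
        rw [hSu, hSw] at hcrT
        exact absurd hcrT (by simp)
      have hZall : ∀ e ∈ w.edges, crZ e = false := by
        intro e he
        obtain ⟨x, y, rfl⟩ := URAux.sym2_repr e
        rw [hcrZ_mk]
        cases hbx : Zb x <;> cases hby : Zb y <;> simp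
        · exact (haux y x (by rwa [Sym2.eq_swap]) hby hbx).elim
        · exact (haux x y he hbx hby).elim
      have hz' := URAux.all_same_side Zb crZ hcrZ_mk w hZall z hzsup
      have ha' := URAux.all_same_side Zb crZ hcrZ_mk w hZall a0 ha0sup
      rw [hZbz] at hz'
      rw [hZba0] at ha'
      rw [← hz'] at ha'
      exact absurd ha' (by simp)
  · -- Case A : every hub has exactly two colored edges — capacity contradiction
    push_neg at hzex
    have ht2' : ∀ hv : Fin n, M ≤ hv.val → hv.val < 2 * M + 1 →
        w.edges.countP (fun e => decide (URAux.chi n M e = URAux.cOf n M hv)) = 2 := by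
      intro hv h1 h2
      have ha := ht2 hv h1 h2
      have hb := hcon' (URAux.cOf n M hv)
      have hc := hzex hv h1 h2
      omega
    set Hubs : Finset (Fin n) :=
      Finset.univ.filter (fun v => M ≤ v.val ∧ v.val < 2 * M + 1) with hHubsdef
    set Aset : Finset (Fin n) := Finset.univ.filter (fun v => v.val < M) with hAsetdef
    have hHcard : Hubs.card = M + 1 := by
      have he : Hubs = (Finset.Ico M (2 * M + 1)).attachFin
          (fun m hm => by rw [Finset.mem_Ico] at hm; omega) := by
        ext v
        simp [hHubsdef, Finset.mem_attachFin, Finset.mem_Ico]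
      rw [he, Finset.card_attachFin, Nat.card_Ico]
      omega
    have hAcard : Aset.card = M := by
      have he : Aset = (Finset.Ico 0 M).attachFin
          (fun m hm => by rw [Finset.mem_Ico] at hm; omega) := by
        ext v
        simp [hAsetdef, Finset.mem_attachFin, Finset.mem_Ico]
      rw [he, Finset.card_attachFin, Nat.card_Ico]
      omega
    have hchiltM : ∀ e ∈ w.edges, URAux.chi n M e ≠ URAux.bgc n → (URAux.chi n M e).val ≤ M := by
      intro e he hbg
      have h1 : (URAux.chi n M e).val < n / 2 + 1 := (URAux.chi n M e).isLt
      have h2 : (URAux.chi n M e).val ≠ n / 2 := by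
        intro hh
        exact hbg (Fin.ext (by rw [URAux.bgc_val]; exact hh))
      omega
    set Colored := w.edges.toFinset.filter (fun e => URAux.chi n M e ≠ URAux.bgc n) with hCdef
    have hColored_eq : Colored = Hubs.biUnion
        (fun h => w.edges.toFinset.filter (fun e => URAux.chi n M e = URAux.cOf n M h)) := by
      ext e
      rw [hCdef]
      simp only [Finset.mem_biUnion, Finset.mem_filter, List.mem_toFinset, hHubsdef,
        Finset.mem_univ, true_and]
      constructor
      · rintro ⟨he, hbg⟩
        obtain ⟨x, y, rfl⟩ := URAux.sym2_repr e
        have hcv := hchiltM _ he hbg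
        rcases hclass x y _ rfl hcv with ⟨h1, h2, h3, h4⟩ | ⟨h1, h2, h3, h4⟩
        · refine ⟨x, ⟨h1, h2⟩, he, ?_⟩
          apply Fin.ext
          rw [URAux.cOf_val]
          omega
        · refine ⟨y, ⟨h1, h2⟩, he, ?_⟩
          apply Fin.ext
          rw [URAux.cOf_val]
          omega
      · rintro ⟨h, ⟨hh1, hh2⟩, he, hc⟩
        refine ⟨he, ?_⟩
        rw [hc]
        intro hbad
        have := congrArg Fin.val hbad
        rw [URAux.bgc_val, URAux.cOf_val] at this
        omega
    have hdisj : ∀ h1 ∈ Hubs, ∀ h2 ∈ Hubs, h1 ≠ h2 → Disjoint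
        (w.edges.toFinset.filter (fun e => URAux.chi n M e = URAux.cOf n M h1))
        (w.edges.toFinset.filter (fun e => URAux.chi n M e = URAux.cOf n M h2)) := by
      intro h1 hm1 h2 hm2 hne12
      rw [hHubsdef] at hm1 hm2
      simp only [Finset.mem_filter, Finset.mem_univ, true_and] at hm1 hm2
      rw [Finset.disjoint_left]
      intro e he1 he2
      simp only [Finset.mem_filter] at he1 he2
      apply hne12
      apply Fin.ext
      have := he1.2.symm.trans he2.2
      have hv := congrArg Fin.val this
      rw [URAux.cOf_val, URAux.cOf_val] at hv
      omega
    have hCcard : Colored.card = 2 * (M + 1) := by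
      rw [hColored_eq, Finset.card_biUnion hdisj]
      have : ∀ h ∈ Hubs, (w.edges.toFinset.filter
          (fun e => URAux.chi n M e = URAux.cOf n M h)).card = 2 := by
        intro h hm
        rw [hHubsdef] at hm
        simp only [Finset.mem_filter, Finset.mem_univ, true_and] at hm
        rw [URAux.card_filter_toFinset hnd]
        exact ht2' h hm.1 hm.2
      rw [Finset.sum_congr rfl this, Finset.sum_const, hHcard, smul_eq_mul]
      omega
    have hsubA : Colored ⊆ Aset.biUnion (fun v => w.edges.toFinset.filter (fun e => v ∈ e)) := by
      intro e he
      rw [hCdef] at he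
      simp only [Finset.mem_filter, List.mem_toFinset] at he
      obtain ⟨he1, hbg⟩ := he
      obtain ⟨x, y, rfl⟩ := URAux.sym2_repr e
      have hcv := hchiltM _ he1 hbg
      simp only [Finset.mem_biUnion, Finset.mem_filter, List.mem_toFinset, hAsetdef,
        Finset.mem_univ, true_and]
      rcases hclass x y _ rfl hcv with ⟨h1, h2, h3, h4⟩ | ⟨h1, h2, h3, h4⟩
      · exact ⟨y, h3, he1, by rw [Sym2.mem_iff]; right; rfl⟩
      · exact ⟨x, h3, he1, by rw [Sym2.mem_iff]; left; rfl⟩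
    have hleA : Colored.card ≤ 2 * M := by
      calc Colored.card ≤ (Aset.biUnion
            (fun v => w.edges.toFinset.filter (fun e => v ∈ e))).card :=
            Finset.card_le_card hsubA
        _ ≤ ∑ v ∈ Aset, (w.edges.toFinset.filter (fun e => v ∈ e)).card :=
            Finset.card_biUnion_le
        _ = ∑ v ∈ Aset, 2 := by
            apply Finset.sum_congr rfl
            intro v hv
            rw [URAux.card_filter_toFinset hnd]
            exact hdeg v
        _ = 2 * M := by rw [Finset.sum_const, hAcard, smul_eq_mul]; omega
    omega
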